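/- arXiv:2604.03442 — 3 statements merged into one kernel-verified Lean document; each statement's English description precedes it below -/
import Mathlib

section
/- Let x ∈ ℝⁿ with 0 < |x| and 0 < r < 1 − |x|. Then the quadratic equation (|a|² + 1)/|a| = (1 + |x|² − r²)/|x| in |a| has a unique solution with |a| > 1, and moreover |a| − 1 > 1 − |x| − r. -/
open Metric Set

private lemma aux_inversion (s r : ℝ) (hs0 : 0 < s) (hr0 : 0 < r) (hsr : s + r < 1) :
    (∃! A : ℝ, 1 < A ∧ (A ^ 2 + 1) / A = (1 + s ^ 2 - r ^ 2) / s) ∧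
    (∀ A : ℝ, 1 < A → (A ^ 2 + 1) / A = (1 + s ^ 2 - r ^ 2) / s →
      A - 1 > 1 - s - r) := by
  have hD : 0 < (1 + s ^ 2 - r ^ 2) ^ 2 - 4 * s ^ 2 := by
    have h1 : 0 < (1 - s) ^ 2 - r ^ 2 := by nlinarith
    have h2 : 0 < (1 + s) ^ 2 - r ^ 2 := by nlinarith
    nlinarith
  obtain ⟨d, hd0, hd2⟩ : ∃ d : ℝ, 0 < d ∧ d ^ 2 = (1 + s ^ 2 - r ^ 2) ^ 2 - 4 * s ^ 2 :=
    ⟨Real.sqrt _, Real.sqrt_pos.mpr hD, Real.sq_sqrt hD.le⟩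
  have hb2s : 2 * s < 1 + s ^ 2 - r ^ 2 := by nlinarith
  obtain ⟨A0, hA0⟩ : ∃ A0 : ℝ, A0 = (1 + s ^ 2 - r ^ 2 + d) / (2 * s) := ⟨_, rfl⟩
  have hA0gt : 1 < A0 := by
    rw [hA0, lt_div_iff₀ (by linarith)]
    nlinarith
  have hA0ne : A0 ≠ 0 := by linarith
  have hq0 : s * A0 ^ 2 - (1 + s ^ 2 - r ^ 2) * A0 + s = 0 := by
    rw [hA0]
    field_simp
    linear_combination hd2
  have hA0eq : (A0 ^ 2 + 1) / A0 = (1 + s ^ 2 - r ^ 2) / s := by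
    rw [div_eq_div_iff hA0ne hs0.ne']
    linear_combination hq0
  have key : ∀ A : ℝ, 1 < A → (A ^ 2 + 1) / A = (1 + s ^ 2 - r ^ 2) / s →
      s * A ^ 2 - (1 + s ^ 2 - r ^ 2) * A + s = 0 := by
    intro A hA heq
    have hAne : A ≠ 0 := by linarith
    rw [div_eq_div_iff hAne hs0.ne'] at heq
    linear_combination heq
  constructor
  · refine ⟨A0, ⟨hA0gt, hA0eq⟩, ?_⟩
    rintro B ⟨hB1, hBeq⟩
    have h1 := key B hB1 hBeq
    have hfac : (B - A0) * (s * (B + A0) - (1 + s ^ 2 - r ^ 2)) = 0 := by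
      linear_combination h1 - hq0
    have hAB : 1 < A0 * B := by nlinarith
    have hpos : 0 < s * (B + A0) - (1 + s ^ 2 - r ^ 2) := by
      nlinarith [mul_pos hs0 (sub_pos.mpr hAB), h1, hB1]
    rcases mul_eq_zero.mp hfac with h | h
    · linarith [sub_eq_zero.mp h]
    · linarith
  · intro A hA heq
    have h1 := key A hA heq
    by_contra hcon
    push_neg at hcon
    have hu : A ≤ 2 - s - r := by linarith
    have hfu : s * (2 - s - r) ^ 2 - (1 + s ^ 2 - r ^ 2) * (2 - s - r) + s < 0 := by
      have hfac : s * (2 - s - r) ^ 2 - (1 + s ^ 2 - r ^ 2) * (2 - s - r) + s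
          = -((1 - s - r) * (2 * (1 - s) ^ 2 + r * (1 + s - r))) := by ring
      rw [hfac]
      have h1' : 0 < 1 - s - r := by linarith
      have h2' : 0 < 2 * (1 - s) ^ 2 + r * (1 + s - r) := by nlinarith
      nlinarith
    have h2 : 0 ≤ (2 - s - r) - A := by linarith
    have h3 : 0 ≤ (2 - s - r) * A - 1 := by
      have : (1:ℝ) * 1 ≤ (2 - s - r) * A :=
        mul_le_mul (by linarith) hA.le (by linarith) (by linarith)
      linarith
    have h4 : (2 - s - r) * (s * A ^ 2 - (1 + s ^ 2 - r ^ 2) * A + s) = 0 := by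
      rw [h1, mul_zero]
    have h5 : A * (s * (2 - s - r) ^ 2 - (1 + s ^ 2 - r ^ 2) * (2 - s - r) + s) < 0 :=
      mul_neg_of_pos_of_neg (by linarith) hfu
    have hid : A * (s * (2 - s - r) ^ 2 - (1 + s ^ 2 - r ^ 2) * (2 - s - r) + s)
        = s * ((2 - s - r) - A) * ((2 - s - r) * A - 1)
          + (2 - s - r) * (s * A ^ 2 - (1 + s ^ 2 - r ^ 2) * A + s) := by ring
    linarith [mul_nonneg (mul_nonneg hs0.le h2) h3, h4, h5, hid]

/-- For `x ≠ 0` and `0 < r < 1 − |x|`, the equation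
`(|a|² + 1)/|a| = (1 + |x|² − r²)/|x|` has a unique solution `|a| > 1`, and any such
solution satisfies `|a| − 1 > 1 − |x| − r`. -/
theorem inversion_center_exists_unique {n : ℕ} (hn : 2 ≤ n)
    (x : EuclideanSpace ℝ (Fin n)) (r : ℝ)
    (hx : x ≠ 0) (hr0 : 0 < r) (hr1 : r < 1 - ‖x‖) :
    (∃! A : ℝ, 1 < A ∧ (A ^ 2 + 1) / A = (1 + ‖x‖ ^ 2 - r ^ 2) / ‖x‖) ∧
    (∀ A : ℝ, 1 < A → (A ^ 2 + 1) / A = (1 + ‖x‖ ^ 2 - r ^ 2) / ‖x‖ →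
      A - 1 > 1 - ‖x‖ - r) := by
  exact aux_inversion ‖x‖ r (norm_pos_iff.mpr hx) hr0 (by linarith)
end

section
/- Let x ≠ 0, 0 < r < 1 − |x|, and let |a| > 1 satisfy (|a|²+1)/|a| = (1+|x|²−r²)/|x|. For t ∈ [0,|x|] let r_t* be defined by (r_t*)² = |a|(1−|a|t)/(|a|−t). Then for all t ∈ (0, |x|], log(1/r_t*) > t²(1 − |x| − r). -/
set_option maxHeartbeats 400000


/-- inequality (15): Let `x ≠ 0`, `0 < r < 1 − |x|`, and let `A = |a| > 1`
satisfy `(A² + 1)/A = (1 + |x|² − r²)/|x|`. With `(r_t*)² = A(1 − A t)/(A − t)`,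
for all `t ∈ (0, |x|]` one has `log(1/r_t*) > t²(1 − |x| − r)`. -/
theorem log_image_radius_lower_bound {n : ℕ} (hn : 2 ≤ n)
    (x : EuclideanSpace ℝ (Fin n)) (r A : ℝ)
    (hx : x ≠ 0) (hr0 : 0 < r) (hr1 : r < 1 - ‖x‖) (hA : 1 < A)
    (hAeq : (A ^ 2 + 1) / A = (1 + ‖x‖ ^ 2 - r ^ 2) / ‖x‖) :
    ∀ t : ℝ, 0 < t → t ≤ ‖x‖ →
      Real.log (1 / Real.sqrt (A * (1 - A * t) / (A - t)))
        > t ^ 2 * (1 - ‖x‖ - r) := by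
  intro t ht0 htX
  set X := ‖x‖ with hXdef
  have hX0 : 0 < X := norm_pos_iff.mpr hx
  have hX1 : X < 1 := by linarith
  have hA0 : (0:ℝ) < A := by linarith
  have hpoly : (A ^ 2 + 1) * X = (1 + X ^ 2 - r ^ 2) * A := by
    field_simp at hAeq
    linarith [hAeq]
  -- identity: A r² = (A − X)(1 − A X)
  have hid : A * r ^ 2 = (A - X) * (1 - A * X) := by linear_combination hpoly
  have hAX : A - X > 0 := by linarith
  have h1 : A * X < 1 := by
    nlinarith [mul_pos hA0 (mul_pos hr0 hr0), sq_nonneg r]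
  -- A + X + r > 2, i.e. A − 1 > 1 − X − r
  have hc1 : (1:ℝ) < 2 - X - r := by linarith
  have h2 : 2 - X - r < A := by
    by_contra hcon
    push_neg at hcon
    -- A ≤ c := 2 − X − r, with A > 1, c > 1, A*c > 1
    have hF : X ^ 2 * (2 - X - r) + (1 - r ^ 2) * (2 - X - r)
        - (2 - X - r) ^ 2 * X - X > 0 := by nlinarith [sq_nonneg (1 - X - r), mul_pos hr0 hX0]
    -- (A − c)(A c − 1) X = A F
    have hkey : (A - (2 - X - r)) * (A * (2 - X - r) - 1) * X
        = A * (X ^ 2 * (2 - X - r) + (1 - r ^ 2) * (2 - X - r)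
          - (2 - X - r) ^ 2 * X - X) := by linear_combination (2 - X - r) * hpoly
    have hAc : 1 < A * (2 - X - r) := by nlinarith
    have hneg : (A - (2 - X - r)) * ((A * (2 - X - r) - 1) * X) ≤ 0 :=
      mul_nonpos_of_nonpos_of_nonneg (by linarith) (mul_nonneg (by linarith) hX0.le)
    nlinarith [mul_pos hA0 hF]
  have hAt : 0 < A - t := by linarith
  have h1t : 0 < 1 - A * t := by nlinarith [mul_le_mul_of_nonneg_left htX hA0.le]
  set S := A * (1 - A * t) / (A - t) with hSdef
  have hS0 : 0 < S := div_pos (mul_pos hA0 h1t) hAt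
  have hSu : 1 - S = t * (A ^ 2 - 1) / (A - t) := by
    rw [hSdef]; field_simp; ring
  have hlog : Real.log S ≤ S - 1 := Real.log_le_sub_one_of_pos hS0
  have hrw : Real.log (1 / Real.sqrt S) = -(Real.log S / 2) := by
    rw [one_div, Real.log_inv, Real.log_sqrt hS0.le]
  rw [hrw]
  have hmain : t ^ 2 * (1 - X - r) < (1 - S) / 2 := by
    rw [hSu]
    rw [div_div, lt_div_iff₀ (by positivity : (0:ℝ) < (A - t) * 2)]
    have hs : 0 < 1 - X - r := by linarith
    have htA : t * (A - t) < 1 := by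
      nlinarith [mul_le_mul_of_nonneg_left htX hA0.le, mul_pos ht0 ht0]
    have hquot : 2 * (A - t) * t * (1 - X - r) < A ^ 2 - 1 := by
      nlinarith [sq_nonneg (A - 1), mul_lt_mul_of_pos_left htA hs]
    calc t ^ 2 * (1 - X - r) * ((A - t) * 2)
        = t * (2 * (A - t) * t * (1 - X - r)) := by ring
      _ < t * (A ^ 2 - 1) := mul_lt_mul_of_pos_left hquot ht0
  linarith
end

section
/- Let x ≠ 0, 0 < r < 1 − |x|, |a| > 1 with (|a|²+1)/|a| = (1+|x|²−r²)/|x|, and (r_t*)² = |a|(1−|a|t)/(|a|−t) for t ∈ [0,|x|]. Then for all t ∈ (0,|x|], the ratio α_t := log(r_t*)/log(r_{|x|}*) satisfies α_t > t²(1 − |x| − r)/log((1 − |x|²)/r). -/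
set_option maxHeartbeats 1600000

/-- inequality (16): Let `x ≠ 0`, `0 < r < 1 − |x|`, `A = |a| > 1` with
`(A² + 1)/A = (1 + |x|² − r²)/|x|`, and `r_t* = √(A(1 − A t)/(A − t))` for `t ∈ [0,|x|]`.
Then for all `t ∈ (0,|x|]` the ratio `α_t = log(r_t*)/log(r_{|x|}*)` satisfies
`α_t > t²(1 − |x| − r)/log((1 − |x|²)/r)`. -/
theorem alpha_lower_bound {n : ℕ} (hn : 2 ≤ n)
    (x : EuclideanSpace ℝ (Fin n)) (r A : ℝ)
    (hx : x ≠ 0) (hr0 : 0 < r) (hr1 : r < 1 - ‖x‖) (hA : 1 < A)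
    (hAeq : (A ^ 2 + 1) / A = (1 + ‖x‖ ^ 2 - r ^ 2) / ‖x‖) :
    ∀ t : ℝ, 0 < t → t ≤ ‖x‖ →
      Real.log (Real.sqrt (A * (1 - A * t) / (A - t)))
          / Real.log (Real.sqrt (A * (1 - A * ‖x‖) / (A - ‖x‖)))
        > t ^ 2 * (1 - ‖x‖ - r) / Real.log ((1 - ‖x‖ ^ 2) / r) := by
  intro t ht htX
  set X := ‖x‖ with hXdef
  have hX0 : 0 < X := norm_pos_iff.mpr hx
  have hX1 : X < 1 := by linarith
  have hA0 : 0 < A := by linarith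
  -- clear denominators in hAeq
  have h1 : (A ^ 2 + 1) * X = (1 + X ^ 2 - r ^ 2) * A := by
    field_simp at hAeq
    linarith [hAeq]
  have key : r ^ 2 * A = (A - X) * (1 - A * X) := by nlinarith [h1]
  have hAXpos : 0 < A - X := by linarith
  have hAX : A * X < 1 := by
    have h2 : 0 < (A - X) * (1 - A * X) := by
      rw [← key]; positivity
    nlinarith [h2]
  -- facts about t
  have hAt : 0 < A - t := by linarith
  have h1At : 0 < 1 - A * t := by nlinarith [mul_le_mul_of_nonneg_left htX hA0.le]
  have hs0 : 0 < A * (1 - A * t) / (A - t) := by positivity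
  have hs1 : A * (1 - A * t) / (A - t) < 1 := by
    rw [div_lt_one hAt]
    nlinarith [mul_pos ht (show (0:ℝ) < A ^ 2 - 1 by nlinarith)]
  -- sqrt at X
  have hsX : Real.sqrt (A * (1 - A * X) / (A - X)) = A * r / (A - X) := by
    have h : A * (1 - A * X) / (A - X) = (A * r / (A - X)) ^ 2 := by
      rw [div_pow, mul_pow, div_eq_div_iff hAXpos.ne' (by positivity)]
      linear_combination (-(A * (A - X))) * key
    rw [h, Real.sqrt_sq (by positivity)]
  rw [hsX]
  have hArlt : A * r < A - X := by
    have hsq : (A * r) ^ 2 < (A - X) ^ 2 := by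
      nlinarith [key, mul_pos hX0 (show (0:ℝ) < A^2 - 1 by nlinarith)]
    nlinarith [hsq, mul_pos (mul_pos hA0 hr0) hAXpos]
  have hLX : Real.log (A * r / (A - X)) < 0 := by
    apply Real.log_neg (by positivity)
    rw [div_lt_one hAXpos]; exact hArlt
  have hd0 : 0 < Real.log ((1 - X ^ 2) / r) := by
    apply Real.log_pos
    rw [lt_div_iff₀ hr0]; nlinarith
  -- -LX < d
  have hbd : -Real.log (A * r / (A - X)) < Real.log ((1 - X ^ 2) / r) := by
    have h : -Real.log (A * r / (A - X)) = Real.log ((A - X) / (A * r)) := by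
      rw [← Real.log_inv, inv_div]
    rw [h]
    apply Real.log_lt_log (by positivity)
    rw [div_lt_div_iff₀ (by positivity) hr0]
    nlinarith [mul_lt_mul_of_pos_right hAX (mul_pos hX0 hr0)]
  -- core polynomial inequality
  have hP : 4 * X ^ 4 * (1 - X - r) ^ 2 ≤ (1 + X ^ 2 - r ^ 2) ^ 2 - 4 * X ^ 2 := by
    have hu : 0 < 1 - X - r := by linarith
    have hq : (0:ℝ) ≤ (1 + X) ^ 2 - r ^ 2 := by nlinarith
    have hb1 : 0 ≤ (1 - X - r) ^ 2 * ((1 + X) ^ 2 - r ^ 2 - 4 * X) := by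
      have : (0:ℝ) ≤ (1 + X) ^ 2 - r ^ 2 - 4 * X := by nlinarith
      positivity
    have hb2 : 0 ≤ 2 * r * (1 - X - r) * ((1 + X) ^ 2 - r ^ 2) :=
      mul_nonneg (by positivity) hq
    have hb3 : 0 ≤ 4 * (1 - X - r) ^ 2 * (X - X ^ 4) := by
      have : (0:ℝ) ≤ X - X ^ 4 := by
        nlinarith [mul_nonneg (mul_nonneg hX0.le (show (0:ℝ) ≤ 1 - X by linarith))
          (show (0:ℝ) ≤ 1 + X + X ^ 2 by positivity)]
      positivity
    nlinarith [hb1, hb2, hb3]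
  have hsqid : X ^ 2 * (A ^ 2 - 1) ^ 2 = A ^ 2 * ((1 + X ^ 2 - r ^ 2) ^ 2 - 4 * X ^ 2) := by
    linear_combination (X * (A ^ 2 + 1) + (1 + X ^ 2 - r ^ 2) * A) * h1
  have hfin : 2 * A * X * (1 - X - r) ≤ A ^ 2 - 1 := by
    have hsq2 : (2 * A * X * (1 - X - r)) ^ 2 ≤ (A ^ 2 - 1) ^ 2 := by
      nlinarith [mul_le_mul_of_nonneg_left hP (sq_nonneg A), hsqid, sq_nonneg X, mul_pos hX0 hX0]
    nlinarith [hsq2, mul_pos (mul_pos hA0 hX0) (show (0:ℝ) < 1 - X - r by linarith),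
      (show (0:ℝ) < A ^ 2 - 1 by nlinarith)]
  have hcore : 2 * t * (A - t) * (1 - X - r) ≤ A ^ 2 - 1 := by
    nlinarith [hfin, mul_pos ht hAt, mul_le_mul htX (show A - t ≤ A by linarith) hAt.le hX0.le,
      (show (0:ℝ) < 1 - X - r by linarith)]
  -- -LT > c
  have hc : t ^ 2 * (1 - X - r) < -Real.log (Real.sqrt (A * (1 - A * t) / (A - t))) := by
    rw [Real.log_sqrt hs0.le]
    have hlog : Real.log (A * (1 - A * t) / (A - t)) < A * (1 - A * t) / (A - t) - 1 :=
      Real.log_lt_sub_one_of_pos hs0 (ne_of_lt hs1)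
    have h1s : A * (1 - A * t) / (A - t) - 1 = -(t * (A ^ 2 - 1) / (A - t)) := by
      field_simp; ring
    rw [h1s] at hlog
    have h2s : t ^ 2 * (1 - X - r) ≤ t * (A ^ 2 - 1) / (A - t) / 2 := by
      rw [div_div, le_div_iff₀ (by positivity : (0:ℝ) < (A - t) * 2)]
      nlinarith [mul_le_mul_of_nonneg_left hcore ht.le]
    linarith
  have hc0 : 0 < t ^ 2 * (1 - X - r) := by
    have : (0:ℝ) < 1 - X - r := by linarith
    positivity
  have hb0 : 0 < -Real.log (A * r / (A - X)) := by linarith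
  have hchain : t ^ 2 * (1 - X - r) / Real.log ((1 - X ^ 2) / r)
      < (-Real.log (Real.sqrt (A * (1 - A * t) / (A - t)))) / (-Real.log (A * r / (A - X))) := by
    calc t ^ 2 * (1 - X - r) / Real.log ((1 - X ^ 2) / r)
        < t ^ 2 * (1 - X - r) / (-Real.log (A * r / (A - X))) :=
          div_lt_div_of_pos_left hc0 hb0 hbd
      _ < (-Real.log (Real.sqrt (A * (1 - A * t) / (A - t)))) / (-Real.log (A * r / (A - X))) := by
          gcongr
  rw [neg_div_neg_eq] at hchain
  exact hchain
end
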